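/- Let ℓ ≥ 1 and k ≥ 1 be integers, and let ψ be any proper 3-coloring of the graph T(u,v,k,ℓ). Then ψ(x_j) = ψ(y_j) holds for all but at most 2^ℓ of the 3^ℓ leaf pairs (x_j, y_j). -/

import Mathlib

/-- The base relation for the graph `P(u,v,b)`: vertices are `Sum.inl 0 = u`,
`Sum.inl 1 = v`, and `Sum.inr i = v_{i+1}` (0-indexed path vertices).
Edges: consecutive path vertices, `u` to odd-numbered path vertices `v₁, v₃, …`
(even 0-based index), and `v` to even-numbered ones `v₂, v₄, …`. -/
def PAdj (b : ℕ) : (Fin 2 ⊕ Fin b) → (Fin 2 ⊕ Fin b) → Prop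
  | Sum.inr i, Sum.inr j => (j : ℕ) = (i : ℕ) + 1
  | Sum.inl x, Sum.inr i => (x : ℕ) = (i : ℕ) % 2
  | _, _ => False

/-- The graph `P(u,v,b)`. -/
def Pgraph (b : ℕ) : SimpleGraph (Fin 2 ⊕ Fin b) := SimpleGraph.fromRel (PAdj b)

/-- The set of proper 3-colorings of a graph `G`. -/
def properColorings {V : Type*} (G : SimpleGraph V) : Set (V → Fin 3) :=
  {ψ | ∀ a b, G.Adj a b → ψ a ≠ ψ b}

/-- The type of "inner" vertices of `T(u,v,k,ℓ)` (all vertices except the two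
special vertices `u, v`). At level `0` these are the `2^k` path vertices of
`P(u,v,2^k)`; at level `ℓ+1` they are the five path vertices `v₁,…,v₅` of the
base copy of `P(u,v,5)` together with the inner vertices of the three glued
copies of `T(·,·,k,ℓ)`. -/
def TInner (k : ℕ) : ℕ → Type
  | 0 => Fin (2 ^ k)
  | ℓ + 1 => Fin 5 ⊕ (Fin 3 × TInner k ℓ)

/-- The vertex type of `T(u,v,k,ℓ)`: the special vertices `u = Sum.inl 0`,
`v = Sum.inl 1` together with the inner vertices. -/
abbrev TVert (k ℓ : ℕ) : Type := Fin 2 ⊕ TInner k ℓ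

/-- The pair of path vertices of `P(u,v,5)` onto which the `c`-th copy of
`T(·,·,k,ℓ-1)` is glued: `(v₁,v₃)` for `c = 0`, `(v₂,v₄)` for `c = 1`,
`(v₃,v₅)` for `c = 2` (0-indexed). -/
def gluePair (c : Fin 3) : Fin 5 × Fin 5 :=
  (⟨c.val, by omega⟩, ⟨c.val + 2, by have := c.isLt; omega⟩)

/-- The embedding of the `c`-th copy of `T(·,·,k,ℓ)` into `T(u,v,k,ℓ+1)`:
its special vertices are identified with the glue pair, and its inner vertices
are tagged with `c`. -/
def embedT (k ℓ : ℕ) (c : Fin 3) : TVert k ℓ → TVert k (ℓ + 1)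
  | Sum.inl x => if x = 0 then Sum.inr (Sum.inl (gluePair c).1)
                 else Sum.inr (Sum.inl (gluePair c).2)
  | Sum.inr w => Sum.inr (Sum.inr (c, w))

/-- The embedding of the base copy of `P(u,v,5)` into `T(u,v,k,ℓ+1)`. -/
def embedP (k ℓ : ℕ) : (Fin 2 ⊕ Fin 5) → TVert k (ℓ + 1)
  | Sum.inl x => Sum.inl x
  | Sum.inr y => Sum.inr (Sum.inl y)

/-- The graph `T(u,v,k,ℓ)`, defined recursively: `T(u,v,k,0) = P(u,v,2^k)`, and
`T(u,v,k,ℓ+1)` is obtained from `P(u,v,5)` by gluing three copies of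
`T(·,·,k,ℓ)` onto the pairs `(v₁,v₃)`, `(v₂,v₄)`, `(v₃,v₅)`. -/
def TGraph (k : ℕ) : (ℓ : ℕ) → SimpleGraph (TVert k ℓ)
  | 0 => Pgraph (2 ^ k)
  | ℓ + 1 => SimpleGraph.fromRel (fun a b =>
      (∃ x y, (Pgraph 5).Adj x y ∧ a = embedP k ℓ x ∧ b = embedP k ℓ y) ∨
      (∃ c x y, (TGraph k ℓ).Adj x y ∧ a = embedT k ℓ c x ∧ b = embedT k ℓ c y))

/-- The leaf pairs of `T(u,v,k,ℓ)`: the `3^ℓ` copies of `P(x,y,2^k)` inside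
`T(u,v,k,ℓ)` are indexed by sequences `s : Fin ℓ → Fin 3` recording which of the
three glued copies is taken at each level; `leafPair k ℓ s` is the pair
`(x_s, y_s)` of special vertices of the corresponding copy. -/
def leafPair (k : ℕ) : (ℓ : ℕ) → (Fin ℓ → Fin 3) → TVert k ℓ × TVert k ℓ
  | 0, _ => (Sum.inl 0, Sum.inl 1)
  | ℓ + 1, s => (embedT k ℓ (s 0) (leafPair k ℓ (fun i => s i.succ)).1,
                 embedT k ℓ (s 0) (leafPair k ℓ (fun i => s i.succ)).2)

instance (b : ℕ) : DecidableRel (PAdj b) := fun p q =>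
  match p, q with
  | Sum.inr i, Sum.inr j => inferInstanceAs (Decidable ((j : ℕ) = (i : ℕ) + 1))
  | Sum.inl x, Sum.inr i => inferInstanceAs (Decidable ((x : ℕ) = (i : ℕ) % 2))
  | Sum.inl _, Sum.inl _ => isFalse id
  | Sum.inr _, Sum.inl _ => isFalse id

instance (b : ℕ) : DecidableRel (Pgraph b).Adj := fun p q =>
  decidable_of_iff _ (SimpleGraph.fromRel_adj (PAdj b) p q).symm

lemma core1 : ∀ u v a b c d e : Fin 3, u ≠ a → u ≠ c → u ≠ e → v ≠ b → v ≠ d →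
    a ≠ b → b ≠ c → c ≠ d → d ≠ e → (a = c ∨ b = d ∨ c = e) := by decide

lemma core2 : ∀ u v a b c d e : Fin 3, u ≠ a → u ≠ c → u ≠ e → v ≠ b → v ≠ d →
    a ≠ b → b ≠ c → c ≠ d → d ≠ e → u = v → (a = c ∧ b = d ∧ c = e) := by decide

lemma exists_mono (φ : (Fin 2 ⊕ Fin 5) → Fin 3)
    (h : ∀ a b, (Pgraph 5).Adj a b → φ a ≠ φ b) :
    ∃ c : Fin 3, φ (Sum.inr (gluePair c).1) = φ (Sum.inr (gluePair c).2) := by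
  have := core1 (φ (Sum.inl 0)) (φ (Sum.inl 1)) (φ (Sum.inr 0)) (φ (Sum.inr 1))
    (φ (Sum.inr 2)) (φ (Sum.inr 3)) (φ (Sum.inr 4))
    (h _ _ (by decide)) (h _ _ (by decide)) (h _ _ (by decide)) (h _ _ (by decide))
    (h _ _ (by decide)) (h _ _ (by decide)) (h _ _ (by decide)) (h _ _ (by decide))
    (h _ _ (by decide))
  rcases this with h' | h' | h'
  · exact ⟨0, h'⟩
  · exact ⟨1, h'⟩
  · exact ⟨2, h'⟩

lemma all_mono (φ : (Fin 2 ⊕ Fin 5) → Fin 3)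
    (h : ∀ a b, (Pgraph 5).Adj a b → φ a ≠ φ b)
    (huv : φ (Sum.inl 0) = φ (Sum.inl 1)) :
    ∀ c : Fin 3, φ (Sum.inr (gluePair c).1) = φ (Sum.inr (gluePair c).2) := by
  have := core2 (φ (Sum.inl 0)) (φ (Sum.inl 1)) (φ (Sum.inr 0)) (φ (Sum.inr 1))
    (φ (Sum.inr 2)) (φ (Sum.inr 3)) (φ (Sum.inr 4))
    (h _ _ (by decide)) (h _ _ (by decide)) (h _ _ (by decide)) (h _ _ (by decide))
    (h _ _ (by decide)) (h _ _ (by decide)) (h _ _ (by decide)) (h _ _ (by decide))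
    (h _ _ (by decide)) huv
  intro c
  fin_cases c
  · exact this.1
  · exact this.2.1
  · exact this.2.2

-- embeddings --
lemma embedT_inj (k ℓ : ℕ) (c : Fin 3) : Function.Injective (embedT k ℓ c) := by
  intro a b h
  match a, b with
  | Sum.inl x, Sum.inl y =>
    fin_cases x <;> fin_cases y <;> simp_all [embedT, gluePair] <;>
      exact absurd (congrArg Fin.val (Sum.inl.inj (Sum.inr.inj h)))
        (by first
          | (show ¬((c:ℕ) = (c:ℕ) + 2); omega)
          | (show ¬((c:ℕ) + 2 = (c:ℕ)); omega))
  | Sum.inl x, Sum.inr w => fin_cases x <;> simp_all [embedT] <;> exact Sum.inl_ne_inr (Sum.inr.inj h)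
  | Sum.inr w, Sum.inl x => fin_cases x <;> simp_all [embedT] <;> exact Sum.inr_ne_inl (Sum.inr.inj h)
  | Sum.inr w, Sum.inr w' =>
    exact congrArg Sum.inr (congrArg Prod.snd (Sum.inr.inj (Sum.inr.inj h)))

lemma embedP_inj (k ℓ : ℕ) : Function.Injective (embedP k ℓ) := by
  intro a b h
  match a, b with
  | Sum.inl x, Sum.inl y => exact congrArg Sum.inl (Sum.inl.inj h)
  | Sum.inl x, Sum.inr w => simp_all [embedP]
  | Sum.inr w, Sum.inl x => simp_all [embedP]
  | Sum.inr w, Sum.inr w' =>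
    exact congrArg Sum.inr (Sum.inl.inj (Sum.inr.inj h))

lemma embedT_adj {k ℓ : ℕ} (c : Fin 3) {x y : TVert k ℓ}
    (h : (TGraph k ℓ).Adj x y) :
    (TGraph k (ℓ + 1)).Adj (embedT k ℓ c x) (embedT k ℓ c y) := by
  rw [show TGraph k (ℓ+1) = SimpleGraph.fromRel _ from rfl, SimpleGraph.fromRel_adj]
  exact ⟨fun e => h.ne (embedT_inj k ℓ c e),
    Or.inl (Or.inr ⟨c, x, y, h, rfl, rfl⟩)⟩

lemma embedP_adj {k ℓ : ℕ} {x y : Fin 2 ⊕ Fin 5}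
    (h : (Pgraph 5).Adj x y) :
    (TGraph k (ℓ + 1)).Adj (embedP k ℓ x) (embedP k ℓ y) := by
  rw [show TGraph k (ℓ+1) = SimpleGraph.fromRel _ from rfl, SimpleGraph.fromRel_adj]
  exact ⟨fun e => h.ne (embedP_inj k ℓ e),
    Or.inl (Or.inl ⟨x, y, h, rfl, rfl⟩)⟩

-- Lemma A --
lemma monoAll (k : ℕ) : ∀ ℓ (ψ : TVert k ℓ → Fin 3),
    (∀ a b, (TGraph k ℓ).Adj a b → ψ a ≠ ψ b) →
    ψ (Sum.inl 0) = ψ (Sum.inl 1) →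
    ∀ s, ψ (leafPair k ℓ s).1 = ψ (leafPair k ℓ s).2 := by
  intro ℓ
  induction ℓ with
  | zero => intro ψ _ huv s; exact huv
  | succ ℓ ih =>
    intro ψ hψ huv s
    have hφ : ∀ a b, (Pgraph 5).Adj a b →
        ψ (embedP k ℓ a) ≠ ψ (embedP k ℓ b) :=
      fun a b h => hψ _ _ (embedP_adj h)
    have hglue := all_mono (fun x => ψ (embedP k ℓ x)) hφ huv (s 0)
    have hc : ∀ a b, (TGraph k ℓ).Adj a b →
        ψ (embedT k ℓ (s 0) a) ≠ ψ (embedT k ℓ (s 0) b) :=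
      fun a b h => hψ _ _ (embedT_adj (s 0) h)
    have := ih (fun x => ψ (embedT k ℓ (s 0) x)) hc
      (by simpa [embedT, embedP] using hglue) (fun i => s i.succ)
    exact this

lemma countBound (k : ℕ) : ∀ ℓ (ψ : TVert k ℓ → Fin 3),
    (∀ a b, (TGraph k ℓ).Adj a b → ψ a ≠ ψ b) →
    Nat.card {s : Fin ℓ → Fin 3 //
      ψ (leafPair k ℓ s).1 ≠ ψ (leafPair k ℓ s).2} ≤ 2 ^ ℓ := by
  intro ℓ
  induction ℓ with
  | zero =>
    intro ψ _
    have h := Nat.card_le_card_of_injective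
      (Subtype.val : {s : Fin 0 → Fin 3 //
        ψ (leafPair k 0 s).1 ≠ ψ (leafPair k 0 s).2} → (Fin 0 → Fin 3))
      Subtype.val_injective
    simpa using h
  | succ ℓ ih =>
    intro ψ hψ
    have hφ : ∀ a b, (Pgraph 5).Adj a b →
        ψ (embedP k ℓ a) ≠ ψ (embedP k ℓ b) :=
      fun a b h => hψ _ _ (embedP_adj h)
    obtain ⟨c₀, hc₀⟩ := exists_mono (fun x => ψ (embedP k ℓ x)) hφ
    have hc : ∀ (c : Fin 3) a b, (TGraph k ℓ).Adj a b →
        ψ (embedT k ℓ c a) ≠ ψ (embedT k ℓ c b) :=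
      fun c a b h => hψ _ _ (embedT_adj c h)
    -- the per-copy bad sets
    set Bd : (c : Fin 3) → (Fin ℓ → Fin 3) → Prop := fun c t =>
      ψ (embedT k ℓ c (leafPair k ℓ t).1) ≠ ψ (embedT k ℓ c (leafPair k ℓ t).2)
      with hBd
    have hle : ∀ c, Nat.card {t // Bd c t} ≤ 2 ^ ℓ := fun c =>
      ih (fun x => ψ (embedT k ℓ c x)) (hc c)
    have h0 : Nat.card {t // Bd c₀ t} = 0 := by
      have he : IsEmpty {t // Bd c₀ t} := by
        refine ⟨fun t => t.2 ?_⟩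
        exact monoAll k ℓ (fun x => ψ (embedT k ℓ c₀ x)) (hc c₀)
          (by simpa [embedT, embedP] using hc₀) t.1
      exact Nat.card_of_isEmpty
    -- injection into the sigma type
    set f : {s : Fin (ℓ+1) → Fin 3 //
        ψ (leafPair k (ℓ+1) s).1 ≠ ψ (leafPair k (ℓ+1) s).2} →
        Σ c : Fin 3, {t : Fin ℓ → Fin 3 // Bd c t} :=
      fun s => ⟨s.1 0, ⟨Fin.tail s.1, s.2⟩⟩ with hf
    have hfinj : Function.Injective f := by
      intro a b hab
      apply Subtype.ext
      have h := congrArg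
        (fun p : (Σ c : Fin 3, {t : Fin ℓ → Fin 3 // Bd c t}) =>
          Fin.cons (α := fun _ : Fin (ℓ+1) => Fin 3) p.1 p.2.1) hab
      change Fin.cons (α := fun _ : Fin (ℓ+1) => Fin 3) (a.1 0) (Fin.tail a.1) =
        Fin.cons (α := fun _ : Fin (ℓ+1) => Fin 3) (b.1 0) (Fin.tail b.1) at h
      simpa only [hf, Fin.cons_self_tail] using h
    have hcard := Nat.card_le_card_of_injective f hfinj
    have hsig : Nat.card (Σ c : Fin 3, {t : Fin ℓ → Fin 3 // Bd c t}) =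
        ∑ c : Fin 3, Nat.card {t : Fin ℓ → Fin 3 // Bd c t} := by
      simp only [Nat.card_eq_fintype_card]
      exact Fintype.card_sigma
    rw [hsig] at hcard
    have hsum : ∑ c : Fin 3, Nat.card {t : Fin ℓ → Fin 3 // Bd c t} ≤
        2 ^ ℓ + 2 ^ ℓ := by
      rw [← Finset.sum_erase_add _ _ (Finset.mem_univ c₀), h0, add_zero]
      have hb := Finset.sum_le_card_nsmul (Finset.univ.erase c₀)
        (fun c => Nat.card {t : Fin ℓ → Fin 3 // Bd c t}) (2 ^ ℓ)
        (fun c _ => hle c)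
      have hcard2 : (Finset.univ.erase c₀).card = 2 := by
        rw [Finset.card_erase_of_mem (Finset.mem_univ c₀)]; simp
      rw [hcard2] at hb
      simpa [two_mul] using hb
    have hp : (2:ℕ) ^ (ℓ+1) = 2 ^ ℓ + 2 ^ ℓ := by ring
    rw [hp]
    exact le_trans hcard hsum

/-- Lemma 3 (main step): for `ℓ, k ≥ 1` and any proper 3-coloring `ψ` of
`T(u,v,k,ℓ)`, the number of leaf pairs `(x_j, y_j)` with `ψ(x_j) ≠ ψ(y_j)` is at
most `2^ℓ` (out of the `3^ℓ` leaf pairs in total). -/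
theorem stmt8 (k ℓ : ℕ) (hk : 1 ≤ k) (hℓ : 1 ≤ ℓ)
    (ψ : TVert k ℓ → Fin 3) (hψ : ψ ∈ properColorings (TGraph k ℓ)) :
    Nat.card {s : Fin ℓ → Fin 3 //
      ψ (leafPair k ℓ s).1 ≠ ψ (leafPair k ℓ s).2} ≤ 2 ^ ℓ :=
  countBound k ℓ ψ hψ
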